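/- arXiv:1509.04320 — 2 statements merged into one kernel-verified Lean document; each statement's English description precedes it below -/
import Mathlib

section
/- For the unit ball b_∞^m of ℓ_∞^m viewed as a subset of ℓ_1^m with n < m, the Kolmogorov n-width satisfies d_n(b_∞^m, ℓ_1^m) = m − n. -/
open scoped ENNReal

/-- Kolmogorov n-width. -/
noncomputable def kolWidth {Y : Type*} [NormedAddCommGroup Y] [NormedSpace ℝ Y]
    (n : ℕ) (H : Set Y) : ℝ≥0∞ :=
  ⨅ (Z : Submodule ℝ Y) (_ : FiniteDimensional ℝ Z ∧ Module.finrank ℝ Z ≤ n),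
    ⨆ x ∈ H, ⨅ z ∈ (Z : Set Y), edist x z

section aux

lemma exists_extreme_vec (m : ℕ) (W : Submodule ℝ (EuclideanSpace ℝ (Fin m))) :
    ∃ y : EuclideanSpace ℝ (Fin m), y ∈ W ∧ (∀ i, |y i| ≤ 1) ∧
      (Module.finrank ℝ W : ℝ) ≤ ∑ i, |y i| := by
  classical
  set K : Set (EuclideanSpace ℝ (Fin m)) := ↑W ∩ {y | ∀ i, |y i| ≤ 1} with hK
  have hKclosed : IsClosed K := by
    refine W.closed_of_finiteDimensional.inter ?_
    have : {y : EuclideanSpace ℝ (Fin m) | ∀ i, |y i| ≤ 1} =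
        ⋂ i, (fun y : EuclideanSpace ℝ (Fin m) => y i) ⁻¹' {t : ℝ | |t| ≤ 1} := by
      ext y; simp [Set.mem_iInter]
    rw [this]
    exact isClosed_iInter fun i =>
      (isClosed_le (by continuity) continuous_const).preimage (EuclideanSpace.proj i).continuous
  have hKbdd : Bornology.IsBounded K := by
    refine (Metric.isBounded_iff_subset_closedBall 0).2 ⟨Real.sqrt m, fun y hy => ?_⟩
    simp only [Metric.mem_closedBall, dist_zero_right]
    rw [EuclideanSpace.norm_eq]
    calc Real.sqrt (∑ i, ‖y i‖ ^ 2) ≤ Real.sqrt (∑ _i : Fin m, (1:ℝ)) := by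
          refine Real.sqrt_le_sqrt (Finset.sum_le_sum fun i _ => ?_)
          have h1 := hy.2 i
          rw [Real.norm_eq_abs]
          nlinarith [abs_nonneg (y i)]
      _ = Real.sqrt m := by simp
      _ ≤ Real.sqrt m := le_refl _
  have hKcomp : IsCompact K := Metric.isCompact_of_isClosed_isBounded hKclosed hKbdd
  obtain ⟨y, hyK, hyext⟩ := hKcomp.extremePoints_nonempty ⟨0, W.zero_mem, fun i => by simp⟩
  refine ⟨y, hyK.1, hyK.2, ?_⟩
  set S : Finset (Fin m) := Finset.univ.filter (fun i => |y i| = 1) with hS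
  -- restriction to S is injective on W
  have hinj : Function.Injective
      (LinearMap.pi (fun i : S => (EuclideanSpace.proj (i : Fin m)).toLinearMap.comp W.subtype)) := by
    rw [← LinearMap.ker_eq_bot, LinearMap.ker_eq_bot']
    intro w hw
    by_contra hw0
    have hwS : ∀ i ∈ S, (w : EuclideanSpace ℝ (Fin m)) i = 0 := by
      intro i hi
      have := congrFun hw ⟨i, hi⟩
      simpa using this
    set T : Finset (Fin m) := Finset.univ.filter (fun i => (w : EuclideanSpace ℝ (Fin m)) i ≠ 0)
      with hT
    have hTne : T.Nonempty := by
      by_contra hTe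
      apply hw0
      have : (w : EuclideanSpace ℝ (Fin m)) = 0 := by
        ext i
        show (w : EuclideanSpace ℝ (Fin m)) i = 0
        by_contra hi
        exact hTe ⟨i, by simp [hT, hi]⟩
      exact Subtype.ext this
    set ε : ℝ := T.inf' hTne (fun i => (1 - |y i|) / |(w : EuclideanSpace ℝ (Fin m)) i|) with hε
    have hεpos : 0 < ε := by
      rw [hε, Finset.lt_inf'_iff]
      intro i hi
      have hiT : (w : EuclideanSpace ℝ (Fin m)) i ≠ 0 := by simpa [hT] using hi
      have hiS : i ∉ S := fun h => hiT (hwS i h)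
      have : |y i| < 1 := lt_of_le_of_ne (hyK.2 i) (by simpa [hS] using hiS)
      exact div_pos (by linarith) (abs_pos.2 hiT)
    have hcoord : ∀ (t : ℝ), |t| ≤ ε → ∀ i, |y i + t * (w : EuclideanSpace ℝ (Fin m)) i| ≤ 1 := by
      intro t ht i
      by_cases hwi : (w : EuclideanSpace ℝ (Fin m)) i = 0
      · simpa [hwi] using hyK.2 i
      · have hiT : i ∈ T := by simp [hT, hwi]
        have hle : ε ≤ (1 - |y i|) / |(w : EuclideanSpace ℝ (Fin m)) i| :=
          Finset.inf'_le _ hiT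
        have habs : |t * (w : EuclideanSpace ℝ (Fin m)) i| ≤ 1 - |y i| := by
          rw [abs_mul]
          have h1 : |t| * |(w : EuclideanSpace ℝ (Fin m)) i| ≤ ε * |(w : EuclideanSpace ℝ (Fin m)) i| :=
            mul_le_mul_of_nonneg_right ht (abs_nonneg _)
          have h2 : ε * |(w : EuclideanSpace ℝ (Fin m)) i| ≤ 1 - |y i| := by
            rw [← div_mul_cancel₀ (1 - |y i|) (abs_ne_zero.2 hwi)]
            exact mul_le_mul_of_nonneg_right hle (abs_nonneg _)
          linarith
        calc |y i + t * (w : EuclideanSpace ℝ (Fin m)) i| ≤ |y i| + |t * (w : EuclideanSpace ℝ (Fin m)) i| := abs_add_le _ _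
          _ ≤ 1 := by linarith
    have hmemp : y + ε • (w : EuclideanSpace ℝ (Fin m)) ∈ K := by
      constructor
      · exact W.add_mem hyK.1 (W.smul_mem _ w.2)
      · intro i
        have := hcoord ε (by rw [abs_of_pos hεpos]) i
        simpa [PiLp.add_apply, PiLp.smul_apply, smul_eq_mul] using this
    have hmemm : y - ε • (w : EuclideanSpace ℝ (Fin m)) ∈ K := by
      constructor
      · exact W.sub_mem hyK.1 (W.smul_mem _ w.2)
      · intro i
        have := hcoord (-ε) (by rw [abs_neg, abs_of_pos hεpos]) i
        simpa [PiLp.sub_apply, PiLp.smul_apply, smul_eq_mul, sub_eq_add_neg, neg_mul] using this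
    have hseg : y ∈ openSegment ℝ (y - ε • (w : EuclideanSpace ℝ (Fin m)))
        (y + ε • (w : EuclideanSpace ℝ (Fin m))) := by
      refine ⟨1/2, 1/2, by norm_num, by norm_num, by norm_num, ?_⟩
      module
    have := hyext hmemm hmemp hseg
    have hεw : ε • (w : EuclideanSpace ℝ (Fin m)) = 0 := by
      have := sub_eq_self.1 this
      exact this
    have : (w : EuclideanSpace ℝ (Fin m)) = 0 := by
      rcases smul_eq_zero.1 hεw with h | h
      · exact absurd h (ne_of_gt hεpos)
      · exact h
    exact hw0 (Subtype.ext this)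
  have hrank : Module.finrank ℝ W ≤ S.card := by
    have := LinearMap.finrank_le_finrank_of_injective hinj
    simpa [Module.finrank_pi] using this
  calc (Module.finrank ℝ W : ℝ) ≤ (S.card : ℝ) := by exact_mod_cast hrank
    _ = ∑ i ∈ S, |y i| := by
        rw [Finset.sum_congr rfl (fun i hi => (Finset.mem_filter.1 hi).2)]
        simp [hS]
    _ ≤ ∑ i, |y i| := Finset.sum_le_sum_of_subset_of_nonneg (Finset.subset_univ S)
        (fun i _ _ => abs_nonneg _)


lemma card_filter_not_lt (m n : ℕ) (hnm : n ≤ m) :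
    (Finset.univ.filter fun i : Fin m => ¬ (i:ℕ) < n).card = m - n := by
  have h1 : (Finset.univ.filter fun i : Fin m => (i:ℕ) < n)
      = Finset.map (Fin.castLEEmb hnm) Finset.univ := by
    ext i
    simp only [Finset.mem_filter, Finset.mem_univ, true_and, Finset.mem_map]
    constructor
    · intro h
      exact ⟨⟨(i:ℕ), h⟩, by ext; simp⟩
    · rintro ⟨j, -, rfl⟩
      simpa using j.2
  have h2 := Finset.card_filter_add_card_filter_not
    (s := (Finset.univ : Finset (Fin m))) (p := fun i : Fin m => (i:ℕ) < n)
  rw [h1] at h2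
  simp only [Finset.card_map, Finset.card_univ, Fintype.card_fin] at h2
  omega

end aux

/-- For `n < m`, the Kolmogorov n-width of the unit ball of `ℓ_∞^m` as a subset of
`ℓ_1^m` equals `m - n`. -/
theorem kolWidth_linftyBall_in_l1 (m n : ℕ) (hnm : n < m) :
    kolWidth n {x : PiLp 1 (fun _ : Fin m => ℝ) | ∀ i, |x i| ≤ 1} =
      ((m - n : ℕ) : ℝ≥0∞) := by
  classical
  apply le_antisymm
  · -- upper bound
    set Z₀ : Submodule ℝ (PiLp 1 (fun _ : Fin m => ℝ)) :=
      { carrier := {x | ∀ i : Fin m, n ≤ (i:ℕ) → x i = 0}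
        add_mem' := by
          intro a b ha hb i hi
          show a i + b i = 0
          rw [ha i hi, hb i hi, add_zero]
        zero_mem' := fun i _ => rfl
        smul_mem' := by
          intro c a ha i hi
          show c * a i = 0
          rw [ha i hi, mul_zero] } with hZ₀
    have hfr : Module.finrank ℝ Z₀ ≤ n := by
      let f : Z₀ →ₗ[ℝ] (Fin n → ℝ) :=
        { toFun := fun x j => (x : PiLp 1 (fun _ : Fin m => ℝ)) (Fin.castLE hnm.le j)
          map_add' := fun a b => rfl
          map_smul' := fun c a => rfl }
      have hinj : Function.Injective f := by
        intro a b hab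
        ext i
        by_cases hi : (i:ℕ) < n
        · have := congrFun hab ⟨(i:ℕ), hi⟩
          simpa [f, Fin.castLE] using this
        · show (a : PiLp 1 (fun _ : Fin m => ℝ)) i = (b : PiLp 1 (fun _ : Fin m => ℝ)) i
          rw [a.2 i (not_lt.1 hi), b.2 i (not_lt.1 hi)]
      have := LinearMap.finrank_le_finrank_of_injective hinj
      simpa [Module.finrank_pi] using this
    refine le_trans (iInf₂_le Z₀ ⟨inferInstance, hfr⟩) ?_
    refine iSup₂_le fun x hx => ?_
    set z : PiLp 1 (fun _ : Fin m => ℝ) := WithLp.toLp 1 (fun i : Fin m => if (i:ℕ) < n then x i else 0) with hz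
    have hzZ : z ∈ Z₀ := by
      intro i hi
      simp [hz, not_lt.2 hi]
    refine le_trans (iInf₂_le z hzZ) ?_
    rw [PiLp.edist_eq_sum (by norm_num : (0:ℝ) < (1 : ℝ≥0∞).toReal)]
    simp only [ENNReal.toReal_one, one_div, inv_one, ENNReal.rpow_one]
    calc ∑ i, edist (x i) (z i)
        ≤ ∑ i : Fin m, (if (i:ℕ) < n then (0:ℝ≥0∞) else 1) := by
          refine Finset.sum_le_sum fun i _ => ?_
          by_cases hi : (i:ℕ) < n
          · simp [hz, hi]
          · simp only [hz, hi, if_false]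
            rw [edist_dist]
            have : dist (x i) (0:ℝ) ≤ 1 := by
              rw [Real.dist_eq, sub_zero]
              exact hx i
            exact le_trans (ENNReal.ofReal_le_ofReal this) (by simp)
      _ = ((m - n : ℕ) : ℝ≥0∞) := by
          rw [Finset.sum_ite, Finset.sum_const, Finset.sum_const, smul_zero, zero_add,
            nsmul_eq_mul, mul_one, card_filter_not_lt m n hnm.le]
  · -- lower bound
    refine le_iInf₂ fun Z hZ => ?_
    let e : PiLp 1 (fun _ : Fin m => ℝ) ≃ₗ[ℝ] EuclideanSpace ℝ (Fin m) :=
      (WithLp.linearEquiv 1 ℝ (∀ _ : Fin m, ℝ)).trans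
        (WithLp.linearEquiv 2 ℝ (∀ _ : Fin m, ℝ)).symm
    set Z' : Submodule ℝ (EuclideanSpace ℝ (Fin m)) := Z.map (e : (PiLp 1 (fun _ : Fin m => ℝ)) →ₗ[ℝ] EuclideanSpace ℝ (Fin m)) with hZ'def
    have hZ'rank : Module.finrank ℝ Z' ≤ n := by
      rw [hZ'def, LinearEquiv.finrank_map_eq e Z]
      exact hZ.2
    have hdim : (m - n : ℕ) ≤ Module.finrank ℝ (Z'ᗮ) := by
      have h := Submodule.finrank_add_finrank_orthogonal Z'
      have hE : Module.finrank ℝ (EuclideanSpace ℝ (Fin m)) = m := by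
        simp [finrank_euclideanSpace]
      omega
    obtain ⟨y, hyW, hy1, hysum⟩ := exists_extreme_vec m (Z'ᗮ)
    set x : PiLp 1 (fun _ : Fin m => ℝ) := WithLp.toLp 1 (fun i : Fin m => if y i < 0 then (-1:ℝ) else 1) with hxdef
    have hxH : ∀ i, |x i| ≤ 1 := by
      intro i
      by_cases hi : y i < 0 <;> simp [hxdef, hi]
    refine le_trans ?_ (le_iSup₂ x hxH)
    refine le_iInf₂ fun z hzZ => ?_
    have hzy : ∑ i, z i * y i = 0 := by
      have hmem : e z ∈ Z' := Submodule.mem_map_of_mem hzZ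
      have h0 := (Submodule.mem_orthogonal Z' y).1 hyW (e z) hmem
      have : ∑ i, (e z) i * y i = 0 := by
        rw [← h0]
        simp [PiLp.inner_apply, RCLike.inner_apply, conj_trivial, mul_comm]
      simpa [e] using this
    have h2 : ∀ i, x i * y i = |y i| := by
      intro i
      by_cases hi : y i < 0
      · simp [hxdef, hi, abs_of_neg hi]
      · simp [hxdef, hi, abs_of_nonneg (not_lt.1 hi)]
    have key : ((m - n : ℕ) : ℝ) ≤ ∑ i, |x i - z i| := by
      calc ((m - n : ℕ) : ℝ) ≤ (Module.finrank ℝ (Z'ᗮ) : ℝ) := by exact_mod_cast hdim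
        _ ≤ ∑ i, |y i| := hysum
        _ = ∑ i, (x i - z i) * y i := by
            rw [← Finset.sum_congr rfl fun i _ => h2 i]
            rw [← sub_zero (∑ i, x i * y i), ← hzy, ← Finset.sum_sub_distrib]
            exact Finset.sum_congr rfl fun i _ => by ring
        _ ≤ ∑ i, |x i - z i| := by
            refine Finset.sum_le_sum fun i _ => ?_
            calc (x i - z i) * y i ≤ |(x i - z i) * y i| := le_abs_self _
              _ = |x i - z i| * |y i| := abs_mul _ _
              _ ≤ |x i - z i| * 1 := mul_le_mul_of_nonneg_left (hy1 i) (abs_nonneg _)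
              _ = |x i - z i| := mul_one _
    rw [edist_dist]
    rw [show ((m - n : ℕ) : ℝ≥0∞) = ENNReal.ofReal ((m - n : ℕ) : ℝ) from
      (ENNReal.ofReal_natCast _).symm]
    refine ENNReal.ofReal_le_ofReal ?_
    rw [PiLp.dist_eq_sum (by norm_num : (0:ℝ) < (1 : ℝ≥0∞).toReal)]
    simp only [ENNReal.toReal_one, one_div, inv_one, Real.rpow_one]
    refine le_trans key (le_of_eq ?_)
    exact Finset.sum_congr rfl fun i _ => by rw [Real.dist_eq]
end

section
/- For the unit ball b_1^m of ℓ_1^m viewed as a subset of ℓ_2^m with n ≤ m, the Kolmogorov n-width satisfies d_n(b_1^m, ℓ_2^m) = √(1 − n/m). -/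
open scoped ENNReal

noncomputable def ez (m : ℕ) (d : ℤ) : ℂ := Complex.exp (2 * Real.pi * Complex.I / m) ^ d

lemma ez_sum_eq (m : ℕ) (hm : 0 < m) (d : ℤ) :
    ∑ j : Fin m, ez m ((j : ℤ) * d) = if (m : ℤ) ∣ d then (m : ℂ) else 0 := by
  have hprim : IsPrimitiveRoot (Complex.exp (2 * Real.pi * Complex.I / m)) m :=
    Complex.isPrimitiveRoot_exp m hm.ne'
  have hone : ∀ d : ℤ, ez m d = 1 ↔ (m : ℤ) ∣ d := fun d => hprim.zpow_eq_one_iff_dvd d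
  have hrw : ∀ j : Fin m, ez m ((j : ℤ) * d) = (ez m d) ^ (j : ℕ) := by
    intro j
    rw [ez, ez, ← zpow_natCast, ← zpow_mul]; congr 1; ring
  simp_rw [hrw]
  rw [Fin.sum_univ_eq_sum_range]
  by_cases hd : (m : ℤ) ∣ d
  · simp [(hone d).2 hd, if_pos hd]
  · have hne : ez m d ≠ 1 := fun h => hd ((hone d).1 h)
    rw [geom_sum_eq hne, if_neg hd]
    have : ez m d ^ m = 1 := by
      rw [ez, ← zpow_natCast, ← zpow_mul]
      exact (hone _).2 ⟨d, by ring⟩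
    rw [this]; simp

lemma ez_add (m : ℕ) (a b : ℤ) : ez m (a + b) = ez m a * ez m b := by
  rw [ez, ez, ez, zpow_add₀ (Complex.exp_ne_zero _)]

lemma ez_zero (m : ℕ) : ez m 0 = 1 := by simp [ez]

lemma ez_conj (m : ℕ) (d : ℤ) : (starRingEnd ℂ) (ez m d) = ez m (-d) := by
  rw [ez, ez, map_zpow₀, ← Complex.exp_conj]
  simp only [map_div₀, map_mul, Complex.conj_I, Complex.conj_ofReal, map_ofNat, map_natCast]
  rw [← Complex.exp_int_mul, ← Complex.exp_int_mul]
  congr 1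
  push_cast
  ring

lemma ez_sum_shift (m : ℕ) (hm : 0 < m) (d c : ℤ) :
    ∑ j : Fin m, ez m (d * ((j : ℤ) - c)) = if (m : ℤ) ∣ d then (m : ℂ) else 0 := by
  have hprim : IsPrimitiveRoot (Complex.exp (2 * Real.pi * Complex.I / m)) m :=
    Complex.isPrimitiveRoot_exp m hm.ne'
  have hone : ∀ e : ℤ, (m : ℤ) ∣ e → ez m e = 1 := fun e he =>
    (hprim.zpow_eq_one_iff_dvd e).2 he
  have : ∀ j : Fin m, ez m (d * ((j : ℤ) - c)) = ez m ((j : ℤ) * d) * ez m (-(d * c)) := by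
    intro j; rw [← ez_add]; congr 1; ring
  simp_rw [this]
  rw [← Finset.sum_mul, ez_sum_eq m hm d]
  by_cases hd : (m : ℤ) ∣ d
  · rw [if_pos hd, hone _ (dvd_neg.2 (hd.mul_right c)), mul_one]
  · rw [if_neg hd, zero_mul]

/-- The symmetric frequency set. -/
noncomputable def Tset (n : ℕ) : Finset ℤ :=
  if Even n then Finset.Icc (-((n / 2 : ℕ) : ℤ)) ((n / 2 : ℕ) : ℤ) \ {0}
  else Finset.Icc (-((n / 2 : ℕ) : ℤ)) ((n / 2 : ℕ) : ℤ)

lemma Tset_card (n : ℕ) : (Tset n).card = n := by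
  have h0 : ((0:ℤ)) ∈ Finset.Icc (-((n / 2 : ℕ) : ℤ)) ((n / 2 : ℕ) : ℤ) := by
    rw [Finset.mem_Icc]; omega
  have hc : (Finset.Icc (-((n / 2 : ℕ) : ℤ)) ((n / 2 : ℕ) : ℤ)).card = 2 * (n / 2) + 1 := by
    rw [Int.card_Icc]; omega
  rw [Tset]
  split_ifs with h
  · rw [Finset.card_sdiff_of_subset (Finset.singleton_subset_iff.2 h0), hc, Finset.card_singleton]
    obtain ⟨k, hk⟩ := h
    omega
  · rw [Nat.even_iff] at h; omega

lemma Tset_mem_bound {n : ℕ} {k : ℤ} (hk : k ∈ Tset n) : |k| ≤ ((n / 2 : ℕ) : ℤ) := by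
  rw [abs_le]
  rw [Tset] at hk
  split_ifs at hk with h
  · simp only [Finset.mem_sdiff, Finset.mem_Icc, Finset.mem_singleton] at hk; omega
  · rw [Finset.mem_Icc] at hk; omega

lemma Tset_neg_mem {n : ℕ} {k : ℤ} (hk : k ∈ Tset n) : -k ∈ Tset n := by
  rw [Tset] at hk ⊢
  split_ifs at hk ⊢ with h
  · simp only [Finset.mem_sdiff, Finset.mem_Icc, Finset.mem_singleton] at hk ⊢; omega
  · rw [Finset.mem_Icc] at hk ⊢; omega

noncomputable def zc (m n : ℕ) (i j : Fin m) : ℂ :=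
  (m : ℂ)⁻¹ * ∑ k ∈ Tset n, ez m (k * ((j : ℤ) - (i : ℤ)))

noncomputable def zv (m n : ℕ) (i : Fin m) : EuclideanSpace ℝ (Fin m) :=
  WithLp.toLp 2 fun j => (zc m n i j).re

lemma zc_conj (m n : ℕ) (i j : Fin m) : (starRingEnd ℂ) (zc m n i j) = zc m n i j := by
  rw [zc, map_mul, map_sum]
  congr 1
  · simp
  · refine Finset.sum_nbij' (fun k => -k) (fun k => -k) ?_ ?_ ?_ ?_ ?_ <;> intros <;>
      simp_all [Tset_neg_mem, ez_conj]

lemma zc_real (m n : ℕ) (i j : Fin m) : ((zc m n i j).re : ℂ) = zc m n i j :=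
  Complex.conj_eq_iff_re.1 (zc_conj m n i j)

lemma zc_diag (m n : ℕ) (i : Fin m) : zc m n i i = (n : ℂ) / m := by
  rw [zc]
  simp [ez_zero, Tset_card n, div_eq_inv_mul]

lemma dvd_add_iff_TT {m n : ℕ} (hnm : n < m) {k l : ℤ} (hk : k ∈ Tset n) (hl : l ∈ Tset n) :
    (m : ℤ) ∣ (k + l) ↔ l = -k := by
  have hb1 := Tset_mem_bound hk
  have hb2 := Tset_mem_bound hl
  rw [abs_le] at hb1 hb2
  have hnm' : (n : ℤ) < m := by exact_mod_cast hnm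
  constructor
  · intro h
    have h0 : k + l = 0 := Int.eq_zero_of_abs_lt_dvd h (abs_lt.2 ⟨by omega, by omega⟩)
    omega
  · rintro rfl; simp

lemma zc_sq_sum (m n : ℕ) (hm : 0 < m) (hnm : n < m) (i : Fin m) :
    ∑ j : Fin m, zc m n i j * zc m n i j = (n : ℂ) / m := by
  have hmul : ∀ (k l d : ℤ), ez m (k * d) * ez m (l * d) = ez m ((k + l) * d) := by
    intro k l d; rw [← ez_add]; congr 1; ring
  have hstep : ∀ j : Fin m, zc m n i j * zc m n i j =
      (m : ℂ)⁻¹ * (m : ℂ)⁻¹ *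
        ∑ k ∈ Tset n, ∑ l ∈ Tset n, ez m ((k + l) * ((j : ℤ) - (i : ℤ))) := by
    intro j
    rw [zc, mul_mul_mul_comm, Finset.sum_mul_sum]
    simp_rw [hmul]
  rw [Finset.sum_congr rfl (fun j _ => hstep j), ← Finset.mul_sum]
  have swap : ∑ j : Fin m, ∑ k ∈ Tset n, ∑ l ∈ Tset n, ez m ((k + l) * ((j : ℤ) - (i : ℤ)))
      = ∑ k ∈ Tset n, ∑ l ∈ Tset n, ∑ j : Fin m, ez m ((k + l) * ((j : ℤ) - (i : ℤ))) := by
    rw [Finset.sum_comm]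
    exact Finset.sum_congr rfl (fun k _ => Finset.sum_comm)
  rw [swap]
  have inner : ∀ k ∈ Tset n, ∑ l ∈ Tset n, ∑ j : Fin m, ez m ((k + l) * ((j : ℤ) - (i : ℤ)))
      = (m : ℂ) := by
    intro k hk
    have : ∀ l ∈ Tset n, ∑ j : Fin m, ez m ((k + l) * ((j : ℤ) - (i : ℤ)))
        = if l = -k then (m : ℂ) else 0 := by
      intro l hl
      rw [ez_sum_shift m hm]
      simp only [dvd_add_iff_TT hnm hk hl]
    rw [Finset.sum_congr rfl this, Finset.sum_ite_eq' (Tset n) (-k) (fun _ => (m : ℂ)),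
      if_pos (Tset_neg_mem hk)]
  rw [Finset.sum_congr rfl inner, Finset.sum_const, Tset_card n, nsmul_eq_mul]
  have hm' : (m : ℂ) ≠ 0 := Nat.cast_ne_zero.2 hm.ne'
  field_simp

lemma ez_re (m : ℕ) (d : ℤ) : (ez m d).re = Real.cos (2 * Real.pi * d / m) := by
  rw [ez, ← Complex.exp_int_mul]
  have : (d : ℂ) * (2 * Real.pi * Complex.I / m) =
      ((2 * Real.pi * d / m : ℝ) : ℂ) * Complex.I := by push_cast; ring
  rw [this, Complex.exp_ofReal_mul_I_re]

lemma zv_apply (m n : ℕ) (i j : Fin m) :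
    zv m n i j = (m : ℝ)⁻¹ * ∑ k ∈ Tset n, Real.cos (2 * Real.pi * ((k * ((j:ℤ) - (i:ℤ)) : ℤ) : ℝ) / m) := by
  rw [zv, PiLp.toLp_apply, zc]
  rw [show ((m : ℂ))⁻¹ = (((m : ℝ)⁻¹ : ℝ) : ℂ) by push_cast; ring]
  rw [Complex.re_ofReal_mul, Complex.re_sum]
  congr 1
  exact Finset.sum_congr rfl (fun k _ => ez_re m _)

lemma zv_diag (m n : ℕ) (i : Fin m) : zv m n i i = n / m := by
  have : ((zv m n i i : ℝ) : ℂ) = (((n / m : ℝ)) : ℂ) := by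
    rw [zv, PiLp.toLp_apply, zc_real, zc_diag]; push_cast; ring
  exact_mod_cast this

lemma zv_sq_sum (m n : ℕ) (hm : 0 < m) (hnm : n < m) (i : Fin m) :
    ∑ j : Fin m, zv m n i j * zv m n i j = n / m := by
  have : ((∑ j : Fin m, zv m n i j * zv m n i j : ℝ) : ℂ) = (((n / m : ℝ)) : ℂ) := by
    push_cast
    simp only [zv, PiLp.toLp_apply, zc_real]
    rw [zc_sq_sum m n hm hnm]
  exact_mod_cast this

lemma single_sub_zv_norm_sq (m n : ℕ) (hm : 0 < m) (hnm : n < m) (i : Fin m) :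
    ‖EuclideanSpace.single i (1:ℝ) - zv m n i‖ ^ 2 = 1 - (n : ℝ) / m := by
  rw [← real_inner_self_eq_norm_sq, PiLp.inner_apply]
  simp only [RCLike.inner_apply, conj_trivial, PiLp.sub_apply, EuclideanSpace.single_apply]
  have expand : ∀ j : Fin m, ((if j = i then (1:ℝ) else 0) - zv m n i j) *
      ((if j = i then (1:ℝ) else 0) - zv m n i j) =
      ((if j = i then (1:ℝ) else 0) - 2 * ((if j = i then (1:ℝ) else 0) * zv m n i j))
        + zv m n i j * zv m n i j := by
    intro j; split_ifs <;> ring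
  rw [Finset.sum_congr rfl (fun j _ => expand j), Finset.sum_add_distrib,
    Finset.sum_sub_distrib, zv_sq_sum m n hm hnm]
  simp only [ite_mul, one_mul, zero_mul, mul_ite, mul_zero, Finset.sum_ite_eq', Finset.mem_univ, if_true]
  rw [zv_diag]
  ring

noncomputable def cvec (m : ℕ) (k : ℤ) : EuclideanSpace ℝ (Fin m) :=
  WithLp.toLp 2 fun j => Real.cos (2 * Real.pi * k * (j : ℕ) / m)

noncomputable def svec (m : ℕ) (k : ℤ) : EuclideanSpace ℝ (Fin m) :=
  WithLp.toLp 2 fun j => Real.sin (2 * Real.pi * k * (j : ℕ) / m)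

noncomputable def Zsub (m n : ℕ) : Submodule ℝ (EuclideanSpace ℝ (Fin m)) :=
  Submodule.span ℝ (Set.range (fun k : (Finset.Icc (if Even n then 1 else 0) ((n / 2 : ℕ) : ℤ)) =>
    cvec m (k : ℤ))) ⊔
  Submodule.span ℝ (Set.range (fun k : (Finset.Icc (1 : ℤ) ((n / 2 : ℕ) : ℤ)) =>
    svec m (k : ℤ)))

lemma Zsub_finrank (m n : ℕ) : Module.finrank ℝ (Zsub m n) ≤ n := by
  have h1 := finrank_range_le_card (R := ℝ)
    (fun k : (Finset.Icc (if Even n then 1 else 0) ((n / 2 : ℕ) : ℤ)) => cvec m (k : ℤ))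
  have h2 := finrank_range_le_card (R := ℝ)
    (fun k : (Finset.Icc (1 : ℤ) ((n / 2 : ℕ) : ℤ)) => svec m (k : ℤ))
  simp only [Set.finrank, Fintype.card_coe] at h1 h2
  refine le_trans (Submodule.finrank_add_le_finrank_add_finrank _ _) ?_
  refine le_trans (add_le_add h1 h2) ?_
  rw [Int.card_Icc, Int.card_Icc]
  rcases Nat.even_or_odd n with h | h
  · rw [if_pos h]
    obtain ⟨k, hk⟩ := h
    omega
  · rw [if_neg (Nat.not_even_iff_odd.2 h)]
    rw [Nat.odd_iff] at h
    omega

lemma cvec_mem_span {m n : ℕ} {k : ℤ} (hk : k ∈ Tset n) : cvec m k ∈ Zsub m n := by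
  have hb := Tset_mem_bound hk
  rw [abs_le] at hb
  have key : ∀ k' : ℤ, k' ∈ Finset.Icc (if Even n then 1 else 0) ((n / 2 : ℕ) : ℤ) →
      cvec m k' ∈ Zsub m n := by
    intro k' hk'
    exact le_sup_left (α := Submodule ℝ (EuclideanSpace ℝ (Fin m))) (Submodule.subset_span ⟨⟨k', hk'⟩, rfl⟩)
  rcases le_or_gt 0 k with h0 | h0
  · refine key k ?_
    rw [Finset.mem_Icc]
    refine ⟨?_, hb.2⟩
    split_ifs with he
    · rcases eq_or_lt_of_le h0 with rfl | h1
      · exfalso; rw [Tset, if_pos he] at hk; simp at hk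
      · omega
    · exact h0
  · have : cvec m k = cvec m (-k) := by
      ext j
      rw [cvec, cvec, PiLp.toLp_apply, PiLp.toLp_apply, show 2 * Real.pi * ((-k : ℤ) : ℝ) * (j : ℕ) / m
        = -(2 * Real.pi * k * (j : ℕ) / m) by push_cast; ring, Real.cos_neg]
    rw [this]
    refine key (-k) ?_
    rw [Finset.mem_Icc]
    constructor
    · split_ifs <;> omega
    · omega

lemma svec_mem_span {m n : ℕ} {k : ℤ} (hk : k ∈ Tset n) : svec m k ∈ Zsub m n := by
  have hb := Tset_mem_bound hk
  rw [abs_le] at hb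
  have key : ∀ k' : ℤ, k' ∈ Finset.Icc (1 : ℤ) ((n / 2 : ℕ) : ℤ) →
      svec m k' ∈ Zsub m n := by
    intro k' hk'
    exact le_sup_right (α := Submodule ℝ (EuclideanSpace ℝ (Fin m))) (Submodule.subset_span ⟨⟨k', hk'⟩, rfl⟩)
  rcases lt_trichotomy k 0 with h0 | rfl | h0
  · have : svec m k = -(svec m (-k)) := by
      ext j
      rw [PiLp.neg_apply, svec, svec, PiLp.toLp_apply, PiLp.toLp_apply, show 2 * Real.pi * ((-k : ℤ) : ℝ) * (j : ℕ) / m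
        = -(2 * Real.pi * k * (j : ℕ) / m) by push_cast; ring, Real.sin_neg]
      ring
    rw [this]
    apply neg_mem
    refine key (-k) ?_
    rw [Finset.mem_Icc]
    omega
  · have : svec m (0 : ℤ) = 0 := by
      ext j
      rw [svec]
      simp
    rw [this]
    exact zero_mem _
  · refine key k ?_
    rw [Finset.mem_Icc]
    omega

lemma zv_eq_sum (m n : ℕ) (hm : 0 < m) (i : Fin m) :
    zv m n i = ∑ k ∈ Tset n,
      (((m : ℝ)⁻¹ * Real.cos (2 * Real.pi * k * (i : ℕ) / m)) • cvec m k +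
       ((m : ℝ)⁻¹ * Real.sin (2 * Real.pi * k * (i : ℕ) / m)) • svec m k) := by
  ext j
  have happ : (∑ k ∈ Tset n,
      (((m : ℝ)⁻¹ * Real.cos (2 * Real.pi * k * (i : ℕ) / m)) • cvec m k +
       ((m : ℝ)⁻¹ * Real.sin (2 * Real.pi * k * (i : ℕ) / m)) • svec m k)) j
      = ∑ k ∈ Tset n,
      (((m : ℝ)⁻¹ * Real.cos (2 * Real.pi * k * (i : ℕ) / m)) * cvec m k j +
       ((m : ℝ)⁻¹ * Real.sin (2 * Real.pi * k * (i : ℕ) / m)) * svec m k j) := by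
    rw [WithLp.ofLp_sum, Finset.sum_apply]
    exact Finset.sum_congr rfl (fun k _ => rfl)
  rw [happ, zv_apply, Finset.mul_sum]
  refine Finset.sum_congr rfl (fun k _ => ?_)
  rw [cvec, svec, PiLp.toLp_apply, PiLp.toLp_apply]
  have harg : 2 * Real.pi * ((k * ((j:ℤ) - (i:ℤ)) : ℤ) : ℝ) / m
      = 2 * Real.pi * k * (j : ℕ) / m - 2 * Real.pi * k * (i : ℕ) / m := by
    push_cast; ring
  rw [harg, Real.cos_sub]
  ring

lemma zv_mem_span (m n : ℕ) (hm : 0 < m) (i : Fin m) : zv m n i ∈ Zsub m n := by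
  rw [zv_eq_sum m n hm i]
  refine Submodule.sum_mem _ (fun k hk => ?_)
  exact add_mem (Submodule.smul_mem _ _ (cvec_mem_span hk))
    (Submodule.smul_mem _ _ (svec_mem_span hk))

lemma sum_smul_single (m : ℕ) (x : EuclideanSpace ℝ (Fin m)) :
    ∑ i, x i • EuclideanSpace.single i (1:ℝ) = x := by
  ext j
  rw [WithLp.ofLp_sum, Finset.sum_apply]
  simp only [PiLp.smul_apply, EuclideanSpace.single_apply, smul_eq_mul, mul_ite, mul_one,
    mul_zero]
  rw [Finset.sum_ite_eq Finset.univ j x]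
  simp

lemma lower_exists (m n : ℕ) (hm : 0 < m) (hnm : n ≤ m)
    (Z : Submodule ℝ (EuclideanSpace ℝ (Fin m))) [FiniteDimensional ℝ Z]
    (hrk : Module.finrank ℝ Z ≤ n) :
    ∃ i : Fin m, ∀ w ∈ Z, 1 - (n : ℝ) / m ≤ ‖EuclideanSpace.single i (1:ℝ) - w‖ ^ 2 := by
  classical
  set d := Module.finrank ℝ Z with hd
  set b := stdOrthonormalBasis ℝ Z with hb
  set B : Fin d → EuclideanSpace ℝ (Fin m) := fun j => (b j : EuclideanSpace ℝ (Fin m)) with hB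
  have horthB : ∀ j k : Fin d, inner ℝ (B j) (B k) = if j = k then (1:ℝ) else 0 := by
    intro j k
    have := orthonormal_iff_ite.1 b.orthonormal j k
    rwa [Submodule.coe_inner] at this
  set f : Fin m → ℝ := fun i => ∑ j, B j i * B j i with hf
  have hfsum : ∑ i, f i = d := by
    rw [Finset.sum_comm]
    have : ∀ j : Fin d, ∑ i, B j i * B j i = 1 := by
      intro j
      have h1 := horthB j j
      rw [if_pos rfl, PiLp.inner_apply] at h1
      simpa [← sq] using h1
    rw [Finset.sum_congr rfl (fun j _ => this j)]
    simp
  have hex : ∃ i : Fin m, f i ≤ (n : ℝ) / m := by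
    have hne : (Finset.univ : Finset (Fin m)).Nonempty := ⟨⟨0, hm⟩, Finset.mem_univ _⟩
    have hsum : ∑ i, f i ≤ ∑ _i : Fin m, (n : ℝ) / m := by
      rw [hfsum, Finset.sum_const, Finset.card_univ, Fintype.card_fin, nsmul_eq_mul]
      rw [mul_div_cancel₀ _ (by exact_mod_cast hm.ne' : (m:ℝ) ≠ 0)]
      calc (d : ℝ) ≤ n := by exact_mod_cast hrk
        _ = n := rfl
    obtain ⟨i, _, hi⟩ := Finset.exists_le_of_sum_le hne hsum
    exact ⟨i, hi⟩
  obtain ⟨i, hi⟩ := hex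
  refine ⟨i, fun w hw => ?_⟩
  set e : EuclideanSpace ℝ (Fin m) := EuclideanSpace.single i (1:ℝ) with he
  set p : EuclideanSpace ℝ (Fin m) := ∑ j, (B j i) • B j with hp
  have hpZ : p ∈ Z := Submodule.sum_mem _ (fun j _ => Submodule.smul_mem _ _ (b j).2)
  have hinner_single : ∀ v : EuclideanSpace ℝ (Fin m), inner ℝ e v = v i := by
    intro v
    rw [PiLp.inner_apply]
    simp only [RCLike.inner_apply, conj_trivial, he, EuclideanSpace.single_apply]
    rw [Finset.sum_congr rfl (fun j _ => by rw [mul_ite, mul_one, mul_zero])]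
    rw [Finset.sum_ite_eq' Finset.univ i v]
    simp
  have hpB : ∀ k : Fin d, inner ℝ p (B k) = (B k i : ℝ) := by
    intro k
    rw [hp, sum_inner]
    have : ∀ j : Fin d, inner ℝ ((B j i) • B j) (B k) = (B j i) * (if j = k then (1:ℝ) else 0) := by
      intro j
      rw [real_inner_smul_left, horthB j k]
    rw [Finset.sum_congr rfl (fun j _ => this j)]
    simp only [mul_ite, mul_one, mul_zero]
    rw [Finset.sum_ite_eq' Finset.univ k (fun j => B j i)]
    simp
  have horthp : ∀ v ∈ Z, inner ℝ (e - p) v = (0:ℝ) := by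
    intro v hv
    have hrepr : (⟨v, hv⟩ : Z) = ∑ j, b.repr ⟨v, hv⟩ j • b j := (b.sum_repr ⟨v, hv⟩).symm
    have hveq : v = ∑ j, b.repr ⟨v, hv⟩ j • B j := by
      have := congrArg (Subtype.val) hrepr
      simpa [hB] using this
    rw [hveq, inner_sum]
    have : ∀ j : Fin d, inner ℝ (e - p) (b.repr ⟨v, hv⟩ j • B j) = (0:ℝ) := by
      intro j
      rw [real_inner_smul_right, inner_sub_left, hinner_single (B j), hpB j]
      ring
    rw [Finset.sum_congr rfl (fun j _ => this j)]
    simp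
  have hPyth : ‖e - p‖ ^ 2 ≤ ‖e - w‖ ^ 2 := by
    have hsplit : e - w = (e - p) + (p - w) := by abel
    rw [hsplit, norm_add_sq_real, horthp (p - w) (Submodule.sub_mem _ hpZ hw)]
    nlinarith [sq_nonneg ‖p - w‖, norm_nonneg (p - w)]
  have hval : ‖e - p‖ ^ 2 = 1 - f i := by
    rw [← real_inner_self_eq_norm_sq, inner_sub_right, horthp p hpZ,
      inner_sub_left, hinner_single e, real_inner_comm e p, hinner_single p]
    have hpi : p i = f i := by
      rw [hp, WithLp.ofLp_sum, Finset.sum_apply]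
      exact Finset.sum_congr rfl (fun j _ => rfl)
    have hei : e i = 1 := by rw [he]; simp [EuclideanSpace.single_apply]
    rw [hpi, hei]
    ring
  have : 1 - (n:ℝ)/m ≤ ‖e - p‖ ^ 2 := by
    rw [hval]
    linarith
  linarith


/-- For `n ≤ m`, the Kolmogorov n-width of the unit ball of `ℓ_1^m` as a subset of
`ℓ_2^m` equals `√(1 - n/m)`. -/
theorem kolWidth_l1Ball_in_l2 (m n : ℕ) (hm : 0 < m) (hnm : n ≤ m) :
    kolWidth n {x : EuclideanSpace ℝ (Fin m) | ∑ i, |x i| ≤ 1} =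
      ENNReal.ofReal (Real.sqrt (1 - (n : ℝ) / m)) := by
  apply le_antisymm
  · rw [kolWidth]
    rcases eq_or_lt_of_le hnm with heq | hlt
    · subst heq
      have htop : FiniteDimensional ℝ (⊤ : Submodule ℝ (EuclideanSpace ℝ (Fin n))) ∧
          Module.finrank ℝ (⊤ : Submodule ℝ (EuclideanSpace ℝ (Fin n))) ≤ n := by
        refine ⟨inferInstance, ?_⟩
        rw [finrank_top, finrank_euclideanSpace_fin]
      refine le_trans (iInf₂_le (⊤ : Submodule ℝ _) htop) ?_
      refine le_trans (iSup₂_le fun x hx => ?_) zero_le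
      refine le_trans (iInf₂_le x (by simp)) ?_
      simp
    · have hZ : FiniteDimensional ℝ (Zsub m n) ∧ Module.finrank ℝ (Zsub m n) ≤ n :=
        ⟨inferInstance, Zsub_finrank m n⟩
      refine le_trans (iInf₂_le (Zsub m n) hZ) (iSup₂_le fun x hx => ?_)
      have hx' : ∑ i, |x i| ≤ 1 := hx
      set zx := ∑ i, x i • zv m n i with hzx
      have hzxZ : zx ∈ Zsub m n :=
        Submodule.sum_mem _ (fun i _ => Submodule.smul_mem _ _ (zv_mem_span m n hm i))
      refine le_trans (iInf₂_le zx hzxZ) ?_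
      rw [edist_dist, dist_eq_norm]
      apply ENNReal.ofReal_le_ofReal
      have hdecomp : x - zx = ∑ i, x i • (EuclideanSpace.single i (1:ℝ) - zv m n i) := by
        rw [Finset.sum_congr rfl (fun i _ => smul_sub (x i) _ _), Finset.sum_sub_distrib,
          sum_smul_single]
      rw [hdecomp]
      have hnorm : ∀ i : Fin m, ‖EuclideanSpace.single i (1:ℝ) - zv m n i‖
          = Real.sqrt (1 - (n:ℝ)/m) := by
        intro i
        rw [← single_sub_zv_norm_sq m n hm hlt i, Real.sqrt_sq (norm_nonneg _)]
      refine le_trans (norm_sum_le _ _) ?_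
      calc ∑ i, ‖x i • (EuclideanSpace.single i (1:ℝ) - zv m n i)‖
          = ∑ i, |x i| * Real.sqrt (1 - (n:ℝ)/m) := by
            refine Finset.sum_congr rfl (fun i _ => ?_)
            rw [norm_smul, hnorm i, Real.norm_eq_abs]
        _ = (∑ i, |x i|) * Real.sqrt (1 - (n:ℝ)/m) := by rw [Finset.sum_mul]
        _ ≤ 1 * Real.sqrt (1 - (n:ℝ)/m) :=
            mul_le_mul_of_nonneg_right hx' (Real.sqrt_nonneg _)
        _ = _ := one_mul _
  · rw [kolWidth]
    refine le_iInf fun Z => le_iInf fun hZ => ?_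
    haveI := hZ.1
    obtain ⟨i, hi⟩ := lower_exists m n hm hnm Z hZ.2
    have hmem : EuclideanSpace.single i (1:ℝ) ∈
        {x : EuclideanSpace ℝ (Fin m) | ∑ j, |x j| ≤ 1} := by
      simp only [Set.mem_setOf_eq, EuclideanSpace.single_apply, apply_ite abs, abs_one, abs_zero]
      rw [Finset.sum_ite_eq' Finset.univ i (fun _ => (1:ℝ))]
      simp
    refine le_trans ?_ (le_biSup _ hmem)
    refine le_iInf₂ fun z hz => ?_
    rw [edist_dist, dist_eq_norm]
    apply ENNReal.ofReal_le_ofReal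
    have h1 := hi z hz
    calc Real.sqrt (1 - (n:ℝ)/m)
        ≤ Real.sqrt (‖EuclideanSpace.single i (1:ℝ) - z‖ ^ 2) := Real.sqrt_le_sqrt h1
      _ = ‖EuclideanSpace.single i (1:ℝ) - z‖ := Real.sqrt_sq (norm_nonneg _)
end
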